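/- Let k be a field containing F_q (q = p^e) and a primitive r-th root of unity, let n be coprime to q, with r/gcd(n,r) dividing q-1, and γ ∈ k^*. Let w be transcendental over k and v satisfy v^q - v = γw^n with [k(v,w):k(w)] = q. Then k(v,w)/k(w^r) is a Galois extension of degree qr. -/

import Mathlib

set_option maxHeartbeats 1000000

open Polynomial IntermediateField

lemma aux_annihilate {k K : Type*} [Field k] [Field K] [Algebra k K]
    {w : K} (hw : Transcendental k w) {r : ℕ} (hr : 0 < r)
    (c : Fin r → K) (hc : ∀ i, c i ∈ IntermediateField.adjoin k {w ^ r})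
    (hsum : ∑ i : Fin r, c i * w ^ (i : ℕ) = 0) : ∀ i, c i = 0 := by
  have key : ∀ i, ∃ PQ : k[X] × k[X], aeval (w ^ r) PQ.2 ≠ 0 ∧
      c i * aeval (w ^ r) PQ.2 = aeval (w ^ r) PQ.1 := by
    intro i
    by_cases h0 : c i = 0
    · exact ⟨(0, 1), by simp, by simp [h0]⟩
    · obtain ⟨P, Q, hPQ⟩ := (mem_adjoin_simple_iff k (c i)).1 (hc i)
      have hQ : aeval (w ^ r) Q ≠ 0 := by
        intro h; apply h0; rw [hPQ, h, div_zero]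
      exact ⟨(P, Q), hQ, by rw [hPQ, div_mul_cancel₀ _ hQ]⟩
  choose PQ hQ hPQ using key
  set S : Fin r → k[X] := fun i => (PQ i).1 * ∏ j ∈ Finset.univ.erase i, (PQ j).2 with hS
  have hR : aeval w (∑ i : Fin r, (Polynomial.expand k r (S i)) * X ^ (i : ℕ)) =
      (∑ i : Fin r, c i * w ^ (i : ℕ)) * ∏ j : Fin r, aeval (w ^ r) (PQ j).2 := by
    rw [map_sum, Finset.sum_mul]
    refine Finset.sum_congr rfl fun i _ => ?_
    rw [map_mul, expand_aeval, map_pow, aeval_X, hS]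
    simp only [map_mul, Polynomial.map_prod, map_prod]
    rw [← hPQ i]
    rw [← Finset.mul_prod_erase Finset.univ (fun j => aeval (w ^ r) (PQ j).2) (Finset.mem_univ i)]
    ring
  rw [hsum, zero_mul] at hR
  have hR0 : (∑ i : Fin r, (Polynomial.expand k r (S i)) * X ^ (i : ℕ)) = 0 :=
    transcendental_iff.1 hw _ hR
  have hSi : ∀ i, S i = 0 := by
    intro i
    ext m
    have := congrArg (fun P => Polynomial.coeff P (r * m + (i : ℕ))) hR0
    simp only [Polynomial.finset_sum_coeff, Polynomial.coeff_zero] at this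
    rw [Finset.sum_eq_single i] at this
    · rwa [Polynomial.coeff_mul_X_pow', if_pos (by omega), Nat.add_sub_cancel,
        Polynomial.coeff_expand hr, if_pos (Dvd.intro m rfl), Nat.mul_div_cancel_left m hr]
        at this
    · intro j _ hji
      rw [Polynomial.coeff_mul_X_pow']
      split_ifs with hle
      · rw [Polynomial.coeff_expand hr]
        have hnd : ¬ r ∣ r * m + (i : ℕ) - (j : ℕ) := by
          intro hdvd
          apply hji
          obtain ⟨u, hu⟩ := hdvd
          have hj : (j : ℕ) % r = (i : ℕ) % r := by
            have h1 : (j : ℕ) + r * u = r * m + (i : ℕ) := by omega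
            have h2 : ((j : ℕ) + r * u) % r = (r * m + (i : ℕ)) % r := by rw [h1]
            simpa [Nat.add_mul_mod_self_left, Nat.mul_add_mod] using h2
          have : (j : ℕ) = (i : ℕ) := by
            rwa [Nat.mod_eq_of_lt j.isLt, Nat.mod_eq_of_lt i.isLt] at hj
          exact Fin.ext this
        rw [if_neg hnd]
      · rfl
    · intro h; exact absurd (Finset.mem_univ i) h
  intro i
  have hprod : ∏ j ∈ Finset.univ.erase i, aeval (w ^ r) (PQ j).2 ≠ 0 :=
    Finset.prod_ne_zero_iff.2 fun j _ => hQ j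
  have hP0 : (PQ i).1 = 0 := by
    have := hSi i
    rw [hS] at this
    simp only at this
    rcases mul_eq_zero.1 this with h | h
    · exact h
    · exfalso
      apply hprod
      rw [← map_prod]
      rw [h]
      simp
  have := hPQ i
  rw [hP0, map_zero] at this
  exact (mul_eq_zero.1 this).resolve_right (hQ i)


lemma aux_prod_ff {F : Type*} [Field F] [Fintype F] :
    ∏ a : F, (X - C a) = X ^ (Fintype.card F) - X := by
  have hs : Splits (X ^ (Fintype.card F) - X : F[X]) := by
    rw [splits_iff_card_roots, FiniteField.roots_X_pow_card_sub_X,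
      FiniteField.X_pow_card_sub_X_natDegree_eq F Fintype.one_lt_card]
    simp
  have hm : Monic (X ^ (Fintype.card F) - X : F[X]) :=
    monic_X_pow_sub (by rw [degree_X]; exact_mod_cast Fintype.one_lt_card)
  rw [hs.eq_prod_roots_of_monic hm, FiniteField.roots_X_pow_card_sub_X]
  rfl

lemma aux_AS_factor {p e q : ℕ} [Fact p.Prime] (he : 0 < e) (hq : q = p ^ e)
    {K : Type*} [Field K] [CharP K p] [Fintype (GaloisField p e)] (ι : GaloisField p e →+* K) (u : K) :
    (X ^ q - X - C (u ^ q - u) : K[X]) =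
      ∏ a : GaloisField p e, (X - C (u + ι a)) := by
  have hcard : Fintype.card (GaloisField p e) = q := by
    rw [hq, ← GaloisField.card p e he.ne', Nat.card_eq_fintype_card]
  have h1 : ∏ a : GaloisField p e, (X - C (ι a) : K[X]) = X ^ q - X := by
    have := congrArg (Polynomial.map ι) (aux_prod_ff (F := GaloisField p e))
    rw [Polynomial.map_prod] at this
    simpa [Polynomial.map_sub, Polynomial.map_pow, hcard] using this
  have h2 := congrArg (fun P : K[X] => P.comp (X - C u)) h1
  simp only [prod_comp, sub_comp, X_comp, C_comp, pow_comp] at h2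
  have h3 : ((X : K[X]) - C u) ^ q = X ^ q - (C u) ^ q := by
    rw [hq]; exact sub_pow_char_pow X (C u) e
  rw [h3] at h2
  calc (X ^ q - X - C (u ^ q - u) : K[X])
      = X ^ q - (C u) ^ q - (X - C u) := by rw [map_sub, ← map_pow]; ring
    _ = ∏ x : GaloisField p e, (X - C u - C (ι x)) := h2.symm
    _ = ∏ a : GaloisField p e, (X - C (u + ι a)) := by
        refine Finset.prod_congr rfl fun a _ => ?_
        rw [map_add, sub_sub]


theorem stmt6 (p e q n r : ℕ) [Fact p.Prime] (he : 0 < e) (hq : q = p ^ e)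
    (k : Type*) [Field k] (φ : GaloisField p e →+* k)
    (hζ : ∃ ζ : k, IsPrimitiveRoot ζ r) (hr : 0 < r)
    (hcop : Nat.Coprime n q) (hdvd : r / Nat.gcd n r ∣ q - 1) (γ : kˣ)
    (K : Type*) [Field K] [Algebra k K] (v w : K)
    (hw : Transcendental k w)
    (hvw : v ^ q - v = algebraMap k K ↑γ * w ^ n)
    (htop : IntermediateField.adjoin k {v, w} = ⊤)
    (hdeg : Module.finrank ↥(IntermediateField.adjoin k {w}) K = q) :
    IsGalois ↥(IntermediateField.adjoin k {w ^ r}) K ∧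
      Module.finrank ↥(IntermediateField.adjoin k {w ^ r}) K = q * r := by
  classical
  obtain ⟨ζ₀, hζ₀⟩ := hζ
  haveI : CharP k p := charP_of_injective_ringHom φ.injective p
  haveI : CharP K p := charP_of_injective_algebraMap
    ((algebraMap k K).injective) p
  haveI : Fintype (GaloisField p e) := Fintype.ofFinite _
  set F := IntermediateField.adjoin k {w ^ r} with hF
  haveI : CharP ↥F p := charP_of_injective_algebraMap
    ((algebraMap k ↥F).injective) p
  have hp1 : 1 < p := (Fact.out (p := p.Prime)).one_lt
  have hq1 : 1 < q := by rw [hq]; exact Nat.one_lt_pow he.ne' hp1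
  have hn0 : n ≠ 0 := by
    rintro rfl
    rw [Nat.coprime_zero_left] at hcop
    omega
  set d := Nat.gcd n r with hd
  have hd0 : 0 < d := Nat.gcd_pos_of_pos_right n hr
  set r' := r / d with hr'
  set n' := n / d with hn'
  have hrr : d * r' = r := Nat.mul_div_cancel' (Nat.gcd_dvd_right n r)
  have hnn : d * n' = n := Nat.mul_div_cancel' (Nat.gcd_dvd_left n r)
  have hr'0 : 0 < r' := by
    rcases Nat.eq_zero_or_pos r' with h | h
    · rw [h, mul_zero] at hrr; omega
    · exact h
  set ζ : K := algebraMap k K ζ₀ with hζdef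
  have hζK : IsPrimitiveRoot ζ r :=
    hζ₀.map_of_injective ((algebraMap k K).injective)
  have hpr : ¬ p ∣ r := by
    rintro ⟨s, hs⟩
    have hs0 : 0 < s := by
      rcases Nat.eq_zero_or_pos s with h | h
      · rw [h, mul_zero] at hs; omega
      · exact h
    have h1 : (ζ ^ s - 1) ^ p = 0 := by
      rw [sub_pow_char, one_pow, ← pow_mul, mul_comm s p, ← hs, hζK.pow_eq_one, sub_self]
    have h2 : ζ ^ s = 1 := by
      have h3 : ζ ^ s - 1 = 0 := pow_eq_zero_iff (by omega : p ≠ 0) |>.mp h1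
      linear_combination h3
    exact hζK.pow_ne_one_of_pos_of_lt hs0.ne'
      (by calc s < p * s := (Nat.lt_mul_iff_one_lt_left hs0).2 hp1
            _ = r := hs.symm) h2
  have hw0 : w ≠ 0 := by
    rintro rfl
    exact hw isAlgebraic_zero
  have hwr0 : w ^ r ≠ 0 := pow_ne_zero r hw0
  set γK : K := algebraMap k K ↑γ with hγdef
  have hγK0 : γK ≠ 0 := by
    intro h
    exact γ.ne_zero ((algebraMap k K).injective (by rw [← hγdef, h, map_zero]))
  set a₀ : ↥F := ⟨w ^ r, mem_adjoin_simple_self k (w ^ r)⟩ with ha₀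
  set E' := IntermediateField.adjoin ↥F {w} with hE'
  -- identification of E' with adjoin k {w}
  have hE'res : E'.restrictScalars k = IntermediateField.adjoin k {w} := by
    rw [hE', IntermediateField.restrictScalars_adjoin]
    apply le_antisymm
    · rw [IntermediateField.adjoin_le_iff]
      rintro x (hx | hx)
      · refine (?_ : F ≤ IntermediateField.adjoin k {w}) hx
        rw [hF, IntermediateField.adjoin_le_iff]
        rintro y hy
        rw [Set.mem_singleton_iff] at hy
        rw [hy]
        exact pow_mem (mem_adjoin_simple_self k w) r
      · exact subset_adjoin k _ hx
    · exact IntermediateField.adjoin.mono _ _ _ Set.subset_union_right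
  have hdegE' : Module.finrank ↥E' K = q := by
    rw [← hdeg, ← hE'res]
    rfl
  haveI : FiniteDimensional ↥E' K :=
    FiniteDimensional.of_finrank_pos (by rw [hdegE']; omega)
  have hwi : IsIntegral ↥F w := by
    refine ⟨X ^ r - C a₀, monic_X_pow_sub_C a₀ hr.ne', ?_⟩
    simp [ha₀]
  haveI hfdE' : FiniteDimensional ↥F ↥E' := adjoin.finiteDimensional hwi
  have hminle : (minpoly ↥F w).natDegree ≤ r := by
    have hdle := minpoly.degree_le_of_ne_zero ↥F w (X_pow_sub_C_ne_zero hr a₀)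
      (by simp [ha₀] : (Polynomial.aeval w) (X ^ r - C a₀) = 0)
    rw [degree_X_pow_sub_C hr] at hdle
    exact natDegree_le_iff_degree_le.2 hdle
  have hfrE' : Module.finrank ↥F ↥E' = r := by
    rw [hE', adjoin.finrank hwi]
    refine le_antisymm hminle ?_
    by_contra hlt
    push_neg at hlt
    set m := minpoly ↥F w with hm
    have hme : ∑ i : Fin r, (algebraMap ↥F K (m.coeff i)) * w ^ (i : ℕ) = 0 := by
      have h0 := minpoly.aeval ↥F w
      rw [aeval_eq_sum_range' hlt, ← Fin.sum_univ_eq_sum_range] at h0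
      rw [← h0]
      exact Finset.sum_congr rfl fun i _ => (Algebra.smul_def _ _).symm
    have hall := aux_annihilate hw hr _ (fun i => by rw [IntermediateField.algebraMap_apply]; exact (m.coeff (i : ℕ)).2) hme
    have hlead := hall ⟨m.natDegree, hlt⟩
    simp only at hlead
    rw [(minpoly.monic hwi).coeff_natDegree, map_one] at hlead
    exact one_ne_zero hlead
  haveI : FiniteDimensional ↥F K := FiniteDimensional.trans ↥F ↥E' K
  have hfrK : Module.finrank ↥F K = q * r := by
    rw [← Module.finrank_mul_finrank ↥F ↥E' K, hfrE', hdegE', mul_comm]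
  -- separability
  have ha₀0 : a₀ ≠ 0 := fun h => hwr0 (congrArg Subtype.val h)
  have hsepw : IsSeparable ↥F w := by
    have hdvdm : minpoly ↥F w ∣ X ^ r - C a₀ := minpoly.dvd ↥F w (by simp [ha₀])
    have hsep : (X ^ r - C a₀ : (↥F)[X]).Separable :=
      separable_X_pow_sub_C a₀
        (fun h => hpr ((CharP.cast_eq_zero_iff ↥F p r).1 h)) ha₀0
    exact hsep.of_dvd hdvdm
  haveI hsepFE : Algebra.IsSeparable ↥F ↥E' :=
    (isSeparable_adjoin_simple_iff_isSeparable _ _).2 hsepw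
  have hwE' : w ∈ E' := mem_adjoin_simple_self ↥F w
  have hγE' : γK * w ^ n ∈ E' := by
    refine mul_mem ?_ (pow_mem hwE' n)
    have := E'.algebraMap_mem ⟨γK, F.algebraMap_mem ↑γ⟩
    simpa using this
  set c₁ : ↥E' := ⟨γK * w ^ n, hγE'⟩ with hc₁
  have hFvw : IntermediateField.adjoin ↥F {v, w} = ⊤ := by
    apply IntermediateField.restrictScalars_injective k
    rw [IntermediateField.restrictScalars_adjoin, IntermediateField.restrictScalars_top]
    rw [eq_top_iff, ← htop]
    apply IntermediateField.adjoin.mono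
    exact Set.subset_union_right
  have hKE' : IntermediateField.adjoin ↥E' {v} = ⊤ := by
    apply IntermediateField.restrictScalars_injective ↥F
    rw [IntermediateField.restrictScalars_adjoin, IntermediateField.restrictScalars_top]
    rw [eq_top_iff, ← hFvw]
    apply IntermediateField.adjoin.mono
    rintro x (rfl | hx)
    · exact Set.mem_union_right _ rfl
    · rw [Set.mem_singleton_iff] at hx
      subst hx
      exact Set.mem_union_left _ hwE'
  haveI : CharP ↥E' p := charP_of_injective_algebraMap (algebraMap ↥F ↥E').injective p
  have hfsep : (X ^ q - X - C c₁ : (↥E')[X]).Separable := by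
    have hder : derivative (X ^ q - X - C c₁ : (↥E')[X]) = -1 := by
      have hq0' : ((q : ℕ) : ↥E') = 0 := by
        rw [CharP.cast_eq_zero_iff ↥E' p q, hq]
        exact dvd_pow_self p he.ne'
      rw [derivative_sub, derivative_sub, derivative_C, derivative_X, derivative_X_pow, hq0']
      simp
    rw [Polynomial.separable_def, hder]
    exact (isCoprime_one_right).neg_right
  have haev : Polynomial.aeval v (X ^ q - X - C c₁ : (↥E')[X]) = 0 := by
    have : algebraMap ↥E' K c₁ = γK * w ^ n := rfl
    simp only [map_sub, aeval_X_pow, aeval_X, aeval_C, this]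
    rw [hvw]
    ring
  have hsepv : IsSeparable ↥E' v := hfsep.of_dvd (minpoly.dvd ↥E' v haev)
  haveI : Algebra.IsSeparable ↥E' K := by
    have h1 : Algebra.IsSeparable ↥E' ↥(IntermediateField.adjoin ↥E' {v}) :=
      (isSeparable_adjoin_simple_iff_isSeparable _ _).2 hsepv
    rw [hKE'] at h1
    exact AlgEquiv.Algebra.isSeparable (IntermediateField.topEquiv (F := ↥E') (E := K))
  haveI hsepFK : Algebra.IsSeparable ↥F K := Algebra.IsSeparable.trans ↥F ↥E' K
  -- the splitting polynomial
  set ι : GaloisField p e →+* K := (algebraMap k K).comp φ with hι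
  set γF : ↥F := ⟨γK, F.algebraMap_mem ↑γ⟩ with hγF
  set b₀ : ↥F := γF ^ r' * a₀ ^ n' with hb₀
  set P : (↥F)[X] := (X ^ r - C a₀) * ((X ^ q - X) ^ r' - C b₀) with hP
  have hζd : IsPrimitiveRoot (ζ ^ d) r' := hζK.pow hr hrr.symm
  have hcr' : (γK * w ^ n) ^ r' = γK ^ r' * (w ^ r) ^ n' := by
    rw [mul_pow, ← pow_mul, ← pow_mul]
    congr 2
    rw [← hnn, ← hrr]
    ring
  have hkum : (X ^ r' - C (γK ^ r' * (w ^ r) ^ n') : K[X]) =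
      ∏ j ∈ Finset.range r', (X - C ((ζ ^ d) ^ j * (γK * w ^ n))) :=
    X_pow_sub_C_eq_prod hζd hr'0 hcr'
  have hζdq : ∀ j : ℕ, ((ζ ^ d) ^ j * v) ^ q - ((ζ ^ d) ^ j * v)
      = (ζ ^ d) ^ j * (γK * w ^ n) := by
    intro j
    have hone : (ζ ^ d) ^ (q - 1) = 1 := by
      obtain ⟨t, ht⟩ := hdvd
      rw [ht, pow_mul, hζd.pow_eq_one, one_pow]
    have h1 : ((ζ ^ d) ^ j) ^ q = (ζ ^ d) ^ j := by
      calc ((ζ ^ d) ^ j) ^ q = ((ζ ^ d) ^ j) ^ (q - 1) * ((ζ ^ d) ^ j) := by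
            rw [← pow_succ]
            congr 1
            omega
        _ = ((ζ ^ d) ^ (q - 1)) ^ j * ((ζ ^ d) ^ j) := by
            rw [← pow_mul, mul_comm j (q - 1), pow_mul]
        _ = (ζ ^ d) ^ j := by rw [hone, one_pow, one_mul]
    calc ((ζ ^ d) ^ j * v) ^ q - ((ζ ^ d) ^ j * v)
        = ((ζ ^ d) ^ j) ^ q * v ^ q - (ζ ^ d) ^ j * v := by rw [mul_pow]
      _ = (ζ ^ d) ^ j * (v ^ q - v) := by rw [h1]; ring
      _ = (ζ ^ d) ^ j * (γK * w ^ n) := by rw [hvw]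
  have hmapP : P.map (algebraMap ↥F K) =
      (X ^ r - C (w ^ r)) * ((X ^ q - X) ^ r' - C (γK ^ r' * (w ^ r) ^ n')) := by
    have h1 : algebraMap ↥F K a₀ = w ^ r := rfl
    have h2 : algebraMap ↥F K b₀ = γK ^ r' * (w ^ r) ^ n' := by
      rw [hb₀, map_mul, map_pow, map_pow, h1]
      rfl
    simp [hP, Polynomial.map_mul, Polynomial.map_sub, Polynomial.map_pow, h1, h2]
  have hsplit2 : ((X ^ q - X) ^ r' - C (γK ^ r' * (w ^ r) ^ n') : K[X]) =
      ∏ j ∈ Finset.range r', ∏ a : GaloisField p e,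
        (X - C ((ζ ^ d) ^ j * v + ι a)) := by
    have hcomp : ((X ^ q - X) ^ r' - C (γK ^ r' * (w ^ r) ^ n') : K[X]) =
        (X ^ r' - C (γK ^ r' * (w ^ r) ^ n')).comp (X ^ q - X) := by
      simp [sub_comp, pow_comp, X_comp, C_comp]
    rw [hcomp, hkum, prod_comp]
    refine Finset.prod_congr rfl fun j _ => ?_
    rw [sub_comp, X_comp, C_comp, ← hζdq j]
    exact aux_AS_factor he hq ι ((ζ ^ d) ^ j * v)
  have hfact1 : (X ^ r - C (w ^ r) : K[X]) =
      ∏ i ∈ Finset.range r, (X - C (ζ ^ i * w)) :=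
    X_pow_sub_C_eq_prod hζK hr rfl
  have hP0 : P ≠ 0 := by
    intro h
    have := congrArg (Polynomial.map (algebraMap ↥F K)) h
    rw [hmapP, Polynomial.map_zero] at this
    refine mul_ne_zero (X_pow_sub_C_ne_zero hr _) ?_ this
    rw [hsplit2]
    exact Finset.prod_ne_zero_iff.2 fun j _ =>
      Finset.prod_ne_zero_iff.2 fun a _ => X_sub_C_ne_zero _
  have hsplits : (P.map (algebraMap ↥F K)).Splits := by
    rw [hmapP]
    apply Splits.mul
    · rw [hfact1]
      exact Splits.prod fun i _ => Splits.X_sub_C _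
    · rw [hsplit2]
      exact Splits.prod fun j _ => Splits.prod fun a _ => Splits.X_sub_C _
  have haevP : ∀ x : K, Polynomial.aeval x P =
      (x ^ r - w ^ r) * ((x ^ q - x) ^ r' - γK ^ r' * (w ^ r) ^ n') := by
    intro x
    rw [Polynomial.aeval_def, ← Polynomial.eval_map, hmapP]
    simp
  have hrootv : v ∈ P.rootSet K := by
    rw [Polynomial.mem_rootSet]
    refine ⟨hP0, ?_⟩
    rw [haevP, hvw, hcr']
    ring
  have hrootw : w ∈ P.rootSet K := by
    rw [Polynomial.mem_rootSet]
    refine ⟨hP0, ?_⟩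
    rw [haevP]
    ring
  have hIF : IntermediateField.adjoin ↥F (P.rootSet K) = ⊤ := by
    rw [eq_top_iff, ← hFvw]
    apply IntermediateField.adjoin.mono
    rintro x (rfl | hx)
    · exact hrootv
    · rw [Set.mem_singleton_iff] at hx
      subst hx
      exact hrootw
  haveI hsf : P.IsSplittingField ↥F K := by
    refine ⟨hsplits, ?_⟩
    rw [← adjoin_toSubalgebra_of_isAlgebraic (fun x hx => isAlgebraic_of_mem_rootSet hx), hIF]
    rfl
  haveI hnorm : Normal ↥F K := Normal.of_isSplittingField P
  haveI : IsGalois ↥F K := { }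
  exact ⟨inferInstance, hfrK⟩
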